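/- Let k = 2^a be a power of 2 and let T_1, …, T_k be a sequence of binary trees where T_1 is a single leaf and T_{j+1} is obtained from T_j by splitting a leaf ℓ_j of T_j into two children (so T_j has exactly j leaves). Then the number of indices j ∈ {1,…,k} with |ℓ_j| < log₂(j) − 2 is at most k/4. -/

import Mathlib

/-- A binary decision tree over `{-1,1}^d` (inputs encoded as `Fin d → Bool`):
each internal node queries a coordinate. -/
inductive DTree (d : ℕ) : Type where
  | leaf : DTree d
  | node : Fin d → DTree d → DTree d → DTree d

namespace DTree

variable {d : ℕ}

/-- The root-to-leaf path followed by input `x` (`false` = left/−1, `true` = right/+1). -/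
def pathOf : DTree d → (Fin d → Bool) → List Bool
  | .leaf, _ => []
  | .node i l r, x => if x i then true :: pathOf r x else false :: pathOf l x

/-- The list of root-to-leaf paths of all leaves of the tree. -/
def leafPaths : DTree d → List (List Bool)
  | .leaf => [[]]
  | .node _ l r => (leafPaths l).map (false :: ·) ++ (leafPaths r).map (true :: ·)

/-- `p` is the path to a leaf of the tree. -/
inductive IsLeafPath : DTree d → List Bool → Prop
  | leaf : IsLeafPath .leaf []
  | left {i : Fin d} {l r : DTree d} {p : List Bool} :
      IsLeafPath l p → IsLeafPath (.node i l r) (false :: p)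
  | right {i : Fin d} {l r : DTree d} {p : List Bool} :
      IsLeafPath r p → IsLeafPath (.node i l r) (true :: p)

/-- The coordinates queried along path `p`. -/
def queriedOn : DTree d → List Bool → List (Fin d)
  | .node i l _, false :: p => i :: queriedOn l p
  | .node i _ r, true :: p => i :: queriedOn r p
  | _, _ => []

/-- `SplitAt T p i T'`: `T'` is obtained from `T` by splitting the leaf at path `p`
with a query to coordinate `i`. -/
inductive SplitAt : DTree d → List Bool → Fin d → DTree d → Prop
  | here (i : Fin d) : SplitAt .leaf [] i (.node i .leaf .leaf)
  | left {i j : Fin d} {l r l' : DTree d} {p : List Bool} :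
      SplitAt l p i l' → SplitAt (.node j l r) (false :: p) i (.node j l' r)
  | right {i j : Fin d} {l r r' : DTree d} {p : List Bool} :
      SplitAt r p i r' → SplitAt (.node j l r) (true :: p) i (.node j l r')

/-- The set of inputs reaching the leaf with path `p`. -/
def reachSet (T : DTree d) (p : List Bool) : Finset (Fin d → Bool) :=
  Finset.univ.filter (fun x => T.pathOf x = p)

/-- Average of `f` over a finite set (conditional expectation under the uniform distribution). -/
noncomputable def condExp (f : (Fin d → Bool) → ℝ) (s : Finset (Fin d → Bool)) : ℝ :=
  (∑ x ∈ s, f x) / s.card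

/-- `𝒢`-impurity of a (partial) tree: `Σ_ℓ 2^{-|ℓ|} 𝒢(E[f_ℓ])`. -/
noncomputable def impurity (G : ℝ → ℝ) (f : (Fin d → Bool) → ℝ) (T : DTree d) : ℝ :=
  ((T.leafPaths).map (fun p => ((2:ℝ) ^ p.length)⁻¹ * G (condExp f (T.reachSet p)))).sum

/-- `LocalGain_{𝒢,f}(ℓ,i)`. -/
noncomputable def localGain (G : ℝ → ℝ) (f : (Fin d → Bool) → ℝ) (T : DTree d)
    (p : List Bool) (i : Fin d) : ℝ :=
  G (condExp f (T.reachSet p))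
    - (1/2 * G (condExp f ((T.reachSet p).filter (fun x => x i = false)))
       + 1/2 * G (condExp f ((T.reachSet p).filter (fun x => x i = true))))

/-- `PurityGain_{𝒢,f}(ℓ,i) = 2^{-|ℓ|}·LocalGain_{𝒢,f}(ℓ,i)`. -/
noncomputable def purityGain (G : ℝ → ℝ) (f : (Fin d → Bool) → ℝ) (T : DTree d)
    (p : List Bool) (i : Fin d) : ℝ :=
  ((2:ℝ) ^ p.length)⁻¹ * localGain G f T p i

/-- `p` is the path to some node (leaf or internal) of the tree. -/
def hasNode : DTree d → List Bool → Prop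
  | _, [] => True
  | .leaf, _ :: _ => False
  | .node _ l _, false :: q => hasNode l q
  | .node _ _ r, true :: q => hasNode r q

theorem hasNode_mono {T T' : DTree d} {r : List Bool} {i : Fin d}
    (h : SplitAt T r i T') : ∀ q, hasNode T q → hasNode T' q := by
  induction h with
  | here i => intro q hq; cases q with
    | nil => trivial
    | cons b t => exact absurd hq (by cases b <;> exact fun h => h)
  | left h ih => intro q hq; cases q with
    | nil => trivial
    | cons b t => cases b <;> [exact ih t hq; exact hq]
  | right h ih => intro q hq; cases q with
    | nil => trivial
    | cons b t => cases b <;> [exact hq; exact ih t hq]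

theorem hasNode_split_child {T T' : DTree d} {r : List Bool} {i : Fin d}
    (h : SplitAt T r i T') : hasNode T' (r ++ [true]) := by
  induction h with
  | here i => trivial
  | left h ih => exact ih
  | right h ih => exact ih

theorem splitAt_isLeafPath {T T' : DTree d} {r : List Bool} {i : Fin d}
    (h : SplitAt T r i T') : IsLeafPath T r := by
  induction h with
  | here i => exact .leaf
  | left h ih => exact .left ih
  | right h ih => exact .right ih

theorem isLeafPath_not_hasNode {T : DTree d} {q : List Bool} (h : IsLeafPath T q)
    (b : Bool) : ¬ hasNode T (q ++ [b]) := by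
  induction h with
  | leaf => exact fun h => h
  | left h ih => exact ih
  | right h ih => exact ih

/-- Injective encoding of bit strings into positive naturals. -/
def enc : List Bool → ℕ
  | [] => 1
  | b :: t => 2 * enc t + (if b then 1 else 0)

theorem one_le_enc (q : List Bool) : 1 ≤ enc q := by
  cases q with
  | nil => exact le_refl 1
  | cons b t => have := one_le_enc t; simp only [enc]; omega

theorem enc_lt (q : List Bool) : enc q < 2 ^ (q.length + 1) := by
  induction q with
  | nil => simp [enc]
  | cons b t ih =>
      simp only [enc, List.length_cons, pow_succ]
      cases b <;> simp <;> omega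

theorem enc_inj : ∀ q q' : List Bool, enc q = enc q' → q = q' := by
  intro q
  induction q with
  | nil =>
      intro q' h
      cases q' with
      | nil => rfl
      | cons b t =>
          have := one_le_enc t
          simp only [enc] at h
          cases b <;> simp at h <;> omega
  | cons b t ih =>
      intro q' h
      cases q' with
      | nil =>
          have := one_le_enc t
          simp only [enc] at h
          cases b <;> simp at h <;> omega
      | cons b' t' =>
          simp only [enc] at h
          have hb : b = b' := by cases b <;> cases b' <;> simp_all <;> omega
          subst hb
          have ht : enc t = enc t' := by cases b <;> simp at h <;> omega
          rw [ih t' ht]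

end DTree

open DTree in
/-- Let `k = 2^a` and `T_1, …, T_k` a sequence of binary trees where `T_1` is a single
leaf and `T_{j+1}` is obtained from `T_j` by splitting a leaf `ℓ_j` of `T_j`.  Then the
number of indices `j ∈ {1,…,k}` with `|ℓ_j| < log₂ j − 2` is at most `k/4`. -/
theorem few_splits_shallow {d a k : ℕ} (hk : k = 2 ^ a)
    (T : ℕ → DTree d) (p : ℕ → List Bool) (i : ℕ → Fin d)
    (hT1 : T 1 = .leaf)
    (hsplit : ∀ j, 1 ≤ j → j ≤ k → SplitAt (T j) (p j) (i j) (T (j + 1))) :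
    (((Finset.Icc 1 k).filter
        (fun j => ((p j).length : ℝ) < Real.logb 2 j - 2)).card : ℝ) ≤ k / 4 := by
  classical
  set S := (Finset.Icc 1 k).filter
      (fun j => ((p j).length : ℝ) < Real.logb 2 j - 2) with hS
  -- every element of S has a short path
  have hmem : ∀ j ∈ S, 1 ≤ j ∧ j ≤ k ∧ (p j).length + 3 ≤ a := by
    intro j hj
    rw [hS, Finset.mem_filter, Finset.mem_Icc] at hj
    obtain ⟨⟨h1, h2⟩, h3⟩ := hj
    refine ⟨h1, h2, ?_⟩
    have hjk : Real.logb 2 j ≤ a := by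
      have h0 : (0:ℝ) < j := by exact_mod_cast h1
      have := Real.logb_le_logb_of_le (b := 2) (by norm_num) h0
        (by exact_mod_cast h2 : (j:ℝ) ≤ k)
      calc Real.logb 2 j ≤ Real.logb 2 k := this
        _ = a := by
          rw [hk]; push_cast
          rw [Real.logb_pow, Real.logb_self_eq_one (by norm_num)]
          ring
    have : ((p j).length : ℝ) + 2 < a := by linarith
    have : ((p j).length + 2 : ℕ) < a := by exact_mod_cast this
    omega
  -- the encoded paths are distinct
  have hinjp : ∀ j1 ∈ S, ∀ j2 ∈ S, p j1 = p j2 → j1 = j2 := by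
    have key : ∀ j1 j2, 1 ≤ j1 → j2 ≤ k → j1 < j2 → p j1 ≠ p j2 := by
      intro j1 j2 h1 h2 hlt heq
      have chain : ∀ m, j1 + 1 ≤ m → m ≤ j2 → hasNode (T m) (p j1 ++ [true]) := by
        intro m
        induction m with
        | zero => omega
        | succ n ih =>
            intro hm1 hm2
            rcases Nat.lt_or_ge (j1 + 1) (n + 1) with h | h
            · exact hasNode_mono (hsplit n (by omega) (by omega)) _
                (ih (by omega) (by omega))
            · have hn : n = j1 := by omega
              subst hn
              exact hasNode_split_child (hsplit n (by omega) (by omega))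
      have h3 := chain j2 (by omega) le_rfl
      rw [heq] at h3
      exact isLeafPath_not_hasNode
        (splitAt_isLeafPath (hsplit j2 (by omega) h2)) true h3
    intro j1 hj1 j2 hj2 heq
    obtain ⟨ha1, hb1, -⟩ := hmem j1 hj1
    obtain ⟨ha2, hb2, -⟩ := hmem j2 hj2
    rcases lt_trichotomy j1 j2 with h | h | h
    · exact absurd heq (key j1 j2 ha1 hb2 h)
    · exact h
    · exact absurd heq.symm (key j2 j1 ha2 hb1 h)
  -- inject into Icc 1 (2^(a-2) - 1)
  have hcard : S.card ≤ (Finset.Icc 1 (2 ^ (a - 2) - 1)).card := by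
    apply Finset.card_le_card_of_injOn (fun j => enc (p j))
    · intro j hj
      obtain ⟨-, -, hlen⟩ := hmem j hj
      simp only [Finset.mem_coe, Finset.mem_Icc]
      refine ⟨one_le_enc _, ?_⟩
      have h1 := enc_lt (p j)
      have h2 : (2:ℕ) ^ ((p j).length + 1) ≤ 2 ^ (a - 2) :=
        Nat.pow_le_pow_right (by norm_num) (by omega)
      omega
    · intro j1 hj1 j2 hj2 heq
      exact hinjp j1 hj1 j2 hj2 (enc_inj _ _ heq)
  rw [Nat.card_Icc] at hcard
  have hcard' : S.card ≤ 2 ^ (a - 2) - 1 := by omega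
  have hR : (S.card : ℝ) ≤ ((2 ^ (a - 2) - 1 : ℕ) : ℝ) := by exact_mod_cast hcard'
  refine hR.trans ?_
  subst hk
  match a with
  | 0 => norm_num
  | 1 => norm_num
  | n + 2 =>
      have h1 : (1:ℕ) ≤ 2 ^ n := Nat.one_le_two_pow
      have e : n + 2 - 2 = n := by omega
      show ((2 ^ (n + 2 - 2) - 1 : ℕ) : ℝ) ≤ ((2 ^ (n + 2) : ℕ) : ℝ) / 4
      rw [e, Nat.cast_sub h1]
      push_cast
      rw [pow_succ, pow_succ]
      nlinarith [pow_pos (by norm_num : (0:ℝ) < 2) n]
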